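/- Let q = (q₁,...,q₅) ∈ ℤ⁵ be admissible and not a permutation of (1,1,1,-1,-3). Then there exists a permutation τ of {1,...,5} such that, setting rᵢ = q_{τ(i)}, one has r₁+r₂+r₃+r₄ ≠ 0 and, for every h ∈ Sp2, Σ_{ℓ=1}^5 (|h_{ℓ2}|² + |h_{ℓ4}|²) r_ℓ ≠ 0. -/

import Mathlib

open Finset

noncomputable section

/-- SU(5): 5×5 special unitary complex matrices. -/
def SU5 : Set (Matrix (Fin 5) (Fin 5) ℂ) :=
  {A | A * A.conjTranspose = 1 ∧ A.det = 1}

/-- The image of the embedding Sp(2) ↪ SU(5). -/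
def Sp2 : Set (Matrix (Fin 5) (Fin 5) ℂ) :=
  {h | h ∈ SU5 ∧
    (∀ i : Fin 5, h i 4 = if i = 4 then 1 else 0) ∧
    (∀ i : Fin 5, h 4 i = if i = 4 then 1 else 0) ∧
    (∀ i j : Fin 5, i < 2 → j < 2 →
      h (i + 2) (j + 2) = (starRingEnd ℂ) (h i j) ∧
      h (i + 2) j = -(starRingEnd ℂ) (h i (j + 2)))}

/-- Admissibility of a 5-tuple of integers. -/
def Admissible (q : Fin 5 → ℤ) : Prop :=
  (∀ i, Odd (q i)) ∧
  (∀ σ : Equiv.Perm (Fin 5), Int.gcd (q (σ 0) + q (σ 1)) (q (σ 2) + q (σ 3)) = 2) ∧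
  3 ≤ (Finset.univ.filter fun i => 0 < q i).card


lemma keytail (A B s t : ℝ) (h1 : 0 ≤ A) (h3 : 0 ≤ B) (hAB : A + B = 1)
    (hsign : (0 < s ∧ 0 < t) ∨ (s < 0 ∧ t < 0)) :
    A * s + B * t ≠ 0 := by
  rcases eq_or_lt_of_le h1 with hA | hA
  · rcases hsign with ⟨hs, ht⟩ | ⟨hs, ht⟩ <;>
      · have : B = 1 := by linarith
        rw [← hA, this]; simp; intro hc; linarith
  · rcases hsign with ⟨hs, ht⟩ | ⟨hs, ht⟩
    · have := mul_pos hA hs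
      have := mul_nonneg h3 ht.le
      positivity
    · have h5 : 0 < A * (-s) := mul_pos hA (by linarith)
      have h6 : 0 ≤ B * (-t) := mul_nonneg h3 (by linarith)
      intro hc; nlinarith

lemma key (q : Fin 5 → ℤ) (τ : Equiv.Perm (Fin 5))
    (hsign : (0 < q (τ 0) + q (τ 2) ∧ 0 < q (τ 1) + q (τ 3)) ∨
      (q (τ 0) + q (τ 2) < 0 ∧ q (τ 1) + q (τ 3) < 0)) :
    q (τ 0) + q (τ 1) + q (τ 2) + q (τ 3) ≠ 0 ∧
    ∀ h ∈ Sp2,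
      ∑ ℓ : Fin 5, (‖h ℓ 1‖ ^ 2 + ‖h ℓ 3‖ ^ 2)
        * (q (τ ℓ) : ℝ) ≠ 0 := by
  constructor
  · rcases hsign with ⟨h1, h2⟩ | ⟨h1, h2⟩ <;> omega
  · rintro h ⟨⟨hu, -⟩, hc4, hr4, hsymp⟩
    have h41 : h 4 1 = 0 := by simpa using hr4 1
    have h43 : h 4 3 = 0 := by simpa using hr4 3
    obtain ⟨e01, e02⟩ := hsymp 0 1 (by decide) (by decide)
    obtain ⟨e11, e12⟩ := hsymp 1 1 (by decide) (by decide)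
    have c02 : (0 + 2 : Fin 5) = 2 := rfl
    have c12 : (1 + 2 : Fin 5) = 3 := rfl
    rw [c02, c12] at e01 e02
    rw [c12] at e11 e12
    have hh : h.conjTranspose * h = 1 := mul_eq_one_comm.mp hu
    have hcol : ∀ c : Fin 5, ∑ ℓ : Fin 5, Complex.normSq (h ℓ c) = 1 := by
      intro c
      have h1 := congrFun (congrFun hh c) c
      rw [Matrix.mul_apply] at h1
      simp only [Matrix.conjTranspose_apply, Matrix.one_apply_eq] at h1
      have h2 : ((∑ ℓ : Fin 5, Complex.normSq (h ℓ c) : ℝ) : ℂ) = 1 := by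
        push_cast
        rw [← h1]
        refine Finset.sum_congr rfl fun j _ => ?_
        rw [Complex.normSq_eq_conj_mul_self]
        rfl
      exact_mod_cast h2
    have hc1 := hcol 1
    rw [Fin.sum_univ_five] at hc1
    rw [e02, e12] at hc1
    simp only [Complex.normSq_neg, Complex.normSq_conj, h41, Complex.normSq_zero] at hc1
    rw [Fin.sum_univ_five, e01, e02, e11, e12]
    simp only [Complex.sq_norm, Complex.normSq_conj, Complex.normSq_neg, h41, h43,
      Complex.normSq_zero]
    have goal2 : (Complex.normSq (h 0 1) + Complex.normSq (h 0 3)) * ((q (τ 0) : ℝ) + (q (τ 2) : ℝ))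
        + (Complex.normSq (h 1 1) + Complex.normSq (h 1 3)) * ((q (τ 1) : ℝ) + (q (τ 3) : ℝ)) ≠ 0 := by
      apply keytail
      · exact add_nonneg (Complex.normSq_nonneg _) (Complex.normSq_nonneg _)
      · exact add_nonneg (Complex.normSq_nonneg _) (Complex.normSq_nonneg _)
      · linarith
      · rcases hsign with ⟨h1, h2⟩ | ⟨h1, h2⟩
        · exact Or.inl ⟨by exact_mod_cast h1, by exact_mod_cast h2⟩
        · exact Or.inr ⟨by exact_mod_cast h1, by exact_mod_cast h2⟩
    intro hc; apply goal2; linarith [hc]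

lemma combo (q : Fin 5 → ℤ) (hq : Admissible q)
    (hnp : ¬ ∃ σ : Equiv.Perm (Fin 5), ∀ i, q i = ![1, 1, 1, -1, -3] (σ i)) :
    ∃ τ : Equiv.Perm (Fin 5),
      ((0 < q (τ 0) + q (τ 2) ∧ 0 < q (τ 1) + q (τ 3)) ∨
        (q (τ 0) + q (τ 2) < 0 ∧ q (τ 1) + q (τ 3) < 0)) := by
  obtain ⟨hodd, hgcd, hpos⟩ := hq
  set σ := Tuple.sort q with hσ
  have hmono := Tuple.monotone_sort q
  have h01 : q (σ 0) ≤ q (σ 1) := hmono (by decide : (0:Fin 5) ≤ 1)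
  have h12 : q (σ 1) ≤ q (σ 2) := hmono (by decide : (1:Fin 5) ≤ 2)
  have h23 : q (σ 2) ≤ q (σ 3) := hmono (by decide : (2:Fin 5) ≤ 3)
  have h34 : q (σ 3) ≤ q (σ 4) := hmono (by decide : (3:Fin 5) ≤ 4)
  have hr2 : 0 < q (σ 2) := by
    by_contra hc
    push_neg at hc
    have hsub : (univ.filter fun i => 0 < q i) ⊆ univ \ {σ 0, σ 1, σ 2} := by
      intro i hi
      simp only [mem_filter, mem_univ, true_and] at hi
      simp only [mem_sdiff, mem_univ, mem_insert, mem_singleton, true_and]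
      push_neg
      refine ⟨?_, ?_, ?_⟩ <;> rintro rfl <;> omega
    have hcard3 : ({σ 0, σ 1, σ 2} : Finset (Fin 5)).card = 3 := by
      rw [card_insert_of_notMem, card_insert_of_notMem, card_singleton]
      · simp only [mem_singleton]
        exact fun hc => (by decide : (1:Fin 5) ≠ 2) (σ.injective hc)
      · simp only [mem_insert, mem_singleton]
        push_neg
        exact ⟨fun hc => (by decide : (0:Fin 5) ≠ 1) (σ.injective hc),
          fun hc => (by decide : (0:Fin 5) ≠ 2) (σ.injective hc)⟩
    have hle := card_le_card hsub
    rw [card_sdiff_of_subset (subset_univ _), card_univ, hcard3] at hle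
    simp at hle
    omega
  rcases lt_trichotomy 0 (q (σ 4) + q (σ 1)) with hz | hz | hz
  · refine ⟨(Equiv.ofBijective (![4,3,1,2,0] : Fin 5 → Fin 5) (by decide)).trans σ, Or.inl ⟨?_, ?_⟩⟩
    · show 0 < q (σ 4) + q (σ 1); omega
    · show 0 < q (σ 3) + q (σ 2); omega
  · have g1 : Int.gcd (q (σ 4) + q (σ 1)) (q (σ 3) + q (σ 0)) = 2 :=
      hgcd ((Equiv.ofBijective (![4,1,3,0,2] : Fin 5 → Fin 5) (by decide)).trans σ)
    rw [← hz, Int.gcd] at g1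
    simp at g1
    have h30 : q (σ 3) + q (σ 0) = -2 := by omega
    rcases lt_or_eq_of_le (show q (σ 3) + q (σ 1) ≤ 0 by omega) with hz2 | hz2
    · refine ⟨(Equiv.ofBijective (![3,2,1,0,4] : Fin 5 → Fin 5) (by decide)).trans σ, Or.inr ⟨?_, ?_⟩⟩
      · show q (σ 3) + q (σ 1) < 0; omega
      · show q (σ 2) + q (σ 0) < 0; omega
    · have g2 : Int.gcd (q (σ 3) + q (σ 1)) (q (σ 2) + q (σ 0)) = 2 :=
        hgcd ((Equiv.ofBijective (![3,1,2,0,4] : Fin 5 → Fin 5) (by decide)).trans σ)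
      rw [hz2, Int.gcd] at g2
      simp at g2
      have h20 : q (σ 2) + q (σ 0) = -2 := by omega
      rcases lt_or_eq_of_le (show q (σ 2) + q (σ 1) ≤ 0 by omega) with hz3 | hz3
      · refine ⟨(Equiv.ofBijective (![2,3,1,0,4] : Fin 5 → Fin 5) (by decide)).trans σ, Or.inr ⟨?_, ?_⟩⟩
        · show q (σ 2) + q (σ 1) < 0; omega
        · show q (σ 3) + q (σ 0) < 0; omega
      · exfalso
        have g3 : Int.gcd (q (σ 3) + q (σ 4)) (q (σ 2) + q (σ 1)) = 2 :=
          hgcd ((Equiv.ofBijective (![3,4,2,1,0] : Fin 5 → Fin 5) (by decide)).trans σ)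
        rw [hz3, Int.gcd] at g3
        simp at g3
        have e4 : q (σ 4) = 1 := by omega
        have e3 : q (σ 3) = 1 := by omega
        have e2 : q (σ 2) = 1 := by omega
        have e1 : q (σ 1) = -1 := by omega
        have e0 : q (σ 0) = -3 := by omega
        apply hnp
        refine ⟨σ.symm.trans (Equiv.ofBijective (![4,3,2,1,0] : Fin 5 → Fin 5) (by decide)), fun i => ?_⟩
        have hi := σ.apply_symm_apply i
        have hall : ∀ j : Fin 5, q (σ j) =
            ![1,1,1,-1,-3] ((Equiv.ofBijective (![4,3,2,1,0] : Fin 5 → Fin 5) (by decide)) j) := by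
          intro j
          fin_cases j
          · exact e0
          · exact e1
          · exact e2
          · exact e3
          · exact e4
        calc q i = q (σ (σ.symm i)) := by rw [hi]
          _ = _ := hall (σ.symm i)
  · refine ⟨(Equiv.ofBijective (![4,3,1,0,2] : Fin 5 → Fin 5) (by decide)).trans σ, Or.inr ⟨?_, ?_⟩⟩
    · show q (σ 4) + q (σ 1) < 0; omega
    · show q (σ 3) + q (σ 0) < 0; omega

theorem stmt15 (q : Fin 5 → ℤ) (hq : Admissible q)
    (hnp : ¬ ∃ σ : Equiv.Perm (Fin 5), ∀ i, q i = ![1, 1, 1, -1, -3] (σ i)) :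
    ∃ τ : Equiv.Perm (Fin 5),
      q (τ 0) + q (τ 1) + q (τ 2) + q (τ 3) ≠ 0 ∧
      ∀ h ∈ Sp2,
        ∑ ℓ : Fin 5, (‖h ℓ 1‖ ^ 2 + ‖h ℓ 3‖ ^ 2)
          * (q (τ ℓ) : ℝ) ≠ 0 := by
  obtain ⟨τ, hτ⟩ := combo q hq hnp
  exact ⟨τ, key q τ hτ⟩
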